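/- Let p > q be primes with q dividing p − 1. Then there exists a group of order p^2·q that cannot be generated by two elements; for example, the semidirect product (Z_p × Z_p) ⋊ Z_q where a generator of Z_q acts by scalar multiplication by a fixed element a of multiplicative order q in (Z/pZ)^*. -/

import Mathlib

open SemidirectProduct Multiplicative

private lemma aux_pow_val_add {p q : ℕ} [Fact q.Prime] (a : (ZMod p)ˣ) (ha : orderOf a = q)
    (z z' : ZMod q) :
    (a : ZMod p) ^ (z + z').val = (a : ZMod p) ^ z.val * (a : ZMod p) ^ z'.val := by
  haveI : NeZero q := ⟨(Fact.out : q.Prime).ne_zero⟩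
  have h2 : ∀ n : ℕ, a ^ (n % q) = a ^ n := by
    intro n
    rw [← ha]
    exact pow_mod_orderOf a n
  have h : a ^ (z + z').val = a ^ z.val * a ^ z'.val := by
    rw [← pow_add, ZMod.val_add, h2 _]
  exact_mod_cast congrArg Units.val h

private lemma aux_not_top (p q : ℕ) [Fact p.Prime] [Fact q.Prime]
    (a : (ZMod p)ˣ) (ha : orderOf a = q)
    (φ : Multiplicative (ZMod q) →* MulAut (Multiplicative (ZMod p × ZMod p)))
    (hφ : ∀ (z : Multiplicative (ZMod q)) (x : Multiplicative (ZMod p × ZMod p)),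
      Multiplicative.toAdd (φ z x) =
        ((a : ZMod p) ^ (Multiplicative.toAdd z).val) • Multiplicative.toAdd x)
    (g₁ g₂ : Multiplicative (ZMod p × ZMod p) ⋊[φ] Multiplicative (ZMod q))
    (hz₁ : Multiplicative.toAdd g₁.right ≠ 0) :
    Subgroup.closure {g₁, g₂} ≠ ⊤ := by
  haveI : NeZero q := ⟨(Fact.out : q.Prime).ne_zero⟩
  set z₁ : ZMod q := toAdd g₁.right with hz₁def
  set z₂ : ZMod q := toAdd g₂.right with hz₂def
  set v₁ : ZMod p × ZMod p := toAdd g₁.left with hv₁def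
  set v₂ : ZMod p × ZMod p := toAdd g₂.left with hv₂def
  set b : ZMod p := (a : ZMod p) ^ z₁.val with hbdef
  -- b ≠ 1
  have hb : b ≠ 1 := by
    intro h
    have hu : a ^ z₁.val = 1 := Units.ext (by simpa using h)
    have hdvd : q ∣ z₁.val := by
      have := orderOf_dvd_of_pow_eq_one hu
      rwa [ha] at this
    have hlt : z₁.val < q := ZMod.val_lt z₁
    have hne : z₁.val ≠ 0 := by
      simpa [ZMod.val_eq_zero] using hz₁
    have := Nat.le_of_dvd (Nat.pos_of_ne_zero hne) hdvd
    omega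
  have hb' : b - 1 ≠ 0 := sub_ne_zero.mpr hb
  have hbinv : (b - 1) * (b - 1)⁻¹ = 1 := mul_inv_cancel₀ hb'
  set r : ZMod p := ((a : ZMod p) ^ z₂.val - 1) * (b - 1)⁻¹ with hrdef
  set u : ZMod p × ZMod p := v₂ - r • v₁ with hudef
  -- a nonzero functional killing u
  obtain ⟨α, β, hαβu, w, hw⟩ :
      ∃ α β : ZMod p, α * u.1 + β * u.2 = 0 ∧
        ∃ w : ZMod p × ZMod p, α * w.1 + β * w.2 ≠ 0 := by
    by_cases hu : u = 0
    · exact ⟨1, 0, by simp [hu], (1, 0), by norm_num⟩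
    · refine ⟨u.2, -u.1, by ring, ?_⟩
      rcases (by
        by_contra h
        push_neg at h
        exact hu (Prod.ext h.1 h.2) : u.1 ≠ 0 ∨ u.2 ≠ 0) with h | h
      · exact ⟨(0, 1), by simpa using h⟩
      · exact ⟨(1, 0), by simpa using h⟩
  set F : ZMod p := α * v₁.1 + β * v₁.2 with hFdef
  set c : ZMod q → ZMod p := fun z => ((a : ZMod p) ^ z.val - 1) * (b - 1)⁻¹ * F with hcdef
  -- the proper subgroup
  set S : Subgroup (Multiplicative (ZMod p × ZMod p) ⋊[φ] Multiplicative (ZMod q)) :=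
    { carrier := {g | α * (toAdd g.left).1 + β * (toAdd g.left).2 = c (toAdd g.right)}
      one_mem' := by simp [hcdef]
      mul_mem' := by
        rintro x y hx hy
        simp only [Set.mem_setOf_eq, mul_left, mul_right, toAdd_mul] at hx hy ⊢
        rw [hφ]
        have hst := aux_pow_val_add a ha (toAdd x.right) (toAdd y.right)
        simp only [hcdef] at hx hy ⊢
        rw [hst]
        simp only [Prod.fst_add, Prod.snd_add, Prod.smul_fst, Prod.smul_snd, smul_eq_mul]
        linear_combination hx + ((a : ZMod p) ^ (toAdd x.right).val) * hy
      inv_mem' := by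
        rintro x hx
        simp only [Set.mem_setOf_eq, inv_left, inv_right, toAdd_inv] at hx ⊢
        rw [hφ]
        have hss : (a : ZMod p) ^ (-(toAdd x.right) + toAdd x.right).val =
            (a : ZMod p) ^ (-(toAdd x.right)).val * (a : ZMod p) ^ (toAdd x.right).val :=
          aux_pow_val_add a ha _ _
        rw [neg_add_cancel] at hss
        simp only [ZMod.val_zero, pow_zero] at hss
        simp only [hcdef] at hx ⊢
        simp only [toAdd_inv, Prod.fst_neg, Prod.snd_neg, Prod.smul_fst, Prod.smul_snd,
          smul_eq_mul]
        linear_combination (-((a : ZMod p) ^ (-(toAdd x.right)).val)) * hx +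
          ((b - 1)⁻¹ * F) * hss }
  have hg₁ : g₁ ∈ S := by
    show α * v₁.1 + β * v₁.2 = c z₁
    simp only [hcdef, ← hbdef]
    rw [hbinv, one_mul]
  have hg₂ : g₂ ∈ S := by
    show α * v₂.1 + β * v₂.2 = c z₂
    have h1 : α * (v₂.1 - r * v₁.1) + β * (v₂.2 - r * v₁.2) = 0 := hαβu
    simp only [hcdef, ← hrdef]
    linear_combination h1 + r * (rfl : F = F)
  intro htop
  have hle : Subgroup.closure {g₁, g₂} ≤ S := by
    rw [Subgroup.closure_le]
    rintro x (rfl | rfl) <;> assumption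
  rw [htop] at hle
  have hx₀ : (⟨ofAdd w, 1⟩ : Multiplicative (ZMod p × ZMod p) ⋊[φ] Multiplicative (ZMod q)) ∈ S :=
    hle (Subgroup.mem_top _)
  have : α * w.1 + β * w.2 = c 0 := by exact hx₀
  rw [hcdef] at this
  simp only [ZMod.val_zero, pow_zero, sub_self, zero_mul] at this
  exact hw this

/-- Let `p > q` be primes with `q ∣ p - 1`. Then the semidirect product
`(ℤ_p × ℤ_p) ⋊ ℤ_q`, where a generator of `ℤ_q` acts by scalar multiplication by a fixed
element `a` of multiplicative order `q` in `(ℤ/pℤ)ˣ`, is a group of order `p ^ 2 * q` that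
cannot be generated by two elements. -/
theorem stmt_11 (p q : ℕ) [Fact p.Prime] [Fact q.Prime] (hpq : q < p) (hdvd : q ∣ p - 1)
    (a : (ZMod p)ˣ) (ha : orderOf a = q)
    (φ : Multiplicative (ZMod q) →* MulAut (Multiplicative (ZMod p × ZMod p)))
    (hφ : ∀ (z : Multiplicative (ZMod q)) (x : Multiplicative (ZMod p × ZMod p)),
      Multiplicative.toAdd (φ z x) =
        ((a : ZMod p) ^ (Multiplicative.toAdd z).val) • Multiplicative.toAdd x) :
    Nat.card (Multiplicative (ZMod p × ZMod p) ⋊[φ] Multiplicative (ZMod q)) = p ^ 2 * q ∧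
    ¬ ∃ g₁ g₂ : Multiplicative (ZMod p × ZMod p) ⋊[φ] Multiplicative (ZMod q),
        Subgroup.closure {g₁, g₂} = ⊤ := by
  haveI : NeZero q := ⟨(Fact.out : q.Prime).ne_zero⟩
  constructor
  · have e : (Multiplicative (ZMod p × ZMod p) ⋊[φ] Multiplicative (ZMod q)) ≃
        (Multiplicative (ZMod p × ZMod p)) × Multiplicative (ZMod q) :=
      ⟨fun x => (x.left, x.right), fun y => ⟨y.1, y.2⟩, fun x => rfl, fun y => rfl⟩
    rw [Nat.card_congr e, Nat.card_prod,
      Nat.card_congr (Multiplicative.toAdd : Multiplicative (ZMod p × ZMod p) ≃ _),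
      Nat.card_congr (Multiplicative.toAdd : Multiplicative (ZMod q) ≃ _),
      Nat.card_prod, Nat.card_zmod, Nat.card_zmod]
    ring
  · rintro ⟨g₁, g₂, htop⟩
    by_cases h1 : toAdd g₁.right ≠ 0
    · exact aux_not_top p q a ha φ hφ g₁ g₂ h1 htop
    by_cases h2 : toAdd g₂.right ≠ 0
    · rw [Set.pair_comm] at htop
      exact aux_not_top p q a ha φ hφ g₂ g₁ h2 htop
    push_neg at h1 h2
    have hle : Subgroup.closure {g₁, g₂} ≤ (rightHom :
        (Multiplicative (ZMod p × ZMod p) ⋊[φ] Multiplicative (ZMod q)) →*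
          Multiplicative (ZMod q)).ker := by
      rw [Subgroup.closure_le]
      rintro x (rfl | rfl) <;>
        · simp only [SetLike.mem_coe, MonoidHom.mem_ker, rightHom_eq_right]
          first
          | exact toAdd.injective (by simpa using h1)
          | exact toAdd.injective (by simpa using h2)
    rw [htop] at hle
    have hmem : (inr (ofAdd (1 : ZMod q)) :
        Multiplicative (ZMod p × ZMod p) ⋊[φ] Multiplicative (ZMod q)) ∈
        MonoidHom.ker rightHom := hle (Subgroup.mem_top _)
    rw [MonoidHom.mem_ker, rightHom_inr] at hmem
    have : (1 : ZMod q) = 0 := by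
      have := congrArg toAdd hmem
      simpa using this
    exact one_ne_zero this
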